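/- For every n ≥ 1, the n-dimensional hypercube Q_n is the digraph of a unitary matrix: there exists a unitary matrix U indexed by the vectors of (ZMod 2)^n (i.e., U : Matrix (Fin n → ZMod 2) (Fin n → ZMod 2) ℂ is unitary) such that for all x, y, U x y ≠ 0 if and only if the Hamming distance between x and y equals 1. (Indeed one can take U = (1/√n)·W for a weighing matrix W of size 2^n and weight n whose support is the adjacency matrix of Q_n.) -/

import Mathlib

open Finset Matrix

section Stmt15

variable {n : ℕ}

/-- Sign used in the Clifford (gamma matrix) construction. -/
noncomputable def sgn (x : Fin n → ZMod 2) (i : Fin n) : ℂ :=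
  ∏ k ∈ Finset.univ.filter (fun k => k < i), (-1 : ℂ) ^ (x k).val

lemma sgn_mul_self (x : Fin n → ZMod 2) (i : Fin n) : sgn x i * sgn x i = 1 := by
  rw [sgn, ← Finset.prod_mul_distrib]
  apply Finset.prod_eq_one
  intro k _
  rw [← mul_pow, neg_one_mul, neg_neg, one_pow]

lemma sgn_ne_zero (x : Fin n → ZMod 2) (i : Fin n) : sgn x i ≠ 0 := by
  intro h
  have h2 := sgn_mul_self x i
  rw [h, zero_mul] at h2
  exact one_ne_zero h2.symm

lemma conj_sgn (x : Fin n → ZMod 2) (i : Fin n) :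
    (starRingEnd ℂ) (sgn x i) = sgn x i := by
  rw [sgn, map_prod]
  apply Finset.prod_congr rfl
  intro k _
  simp

lemma pow_val_add_one (a : ZMod 2) : (-1:ℂ) ^ ((a+1).val) = -(-1:ℂ) ^ a.val := by
  fin_cases a
  · show (-1:ℂ) ^ ((0:ZMod 2)+1).val = -(-1:ℂ) ^ (0:ZMod 2).val
    rw [show ((0:ZMod 2)+1) = 1 from rfl, show ZMod.val (0:ZMod 2) = 0 from rfl,
      show ZMod.val (1:ZMod 2) = 1 from rfl]
    norm_num
  · show (-1:ℂ) ^ ((1:ZMod 2)+1).val = -(-1:ℂ) ^ (1:ZMod 2).val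
    rw [show ((1:ZMod 2)+1) = 0 from rfl, show ZMod.val (0:ZMod 2) = 0 from rfl,
      show ZMod.val (1:ZMod 2) = 1 from rfl]
    norm_num

lemma sgn_add_single (x : Fin n → ZMod 2) (j i : Fin n) :
    sgn (x + Pi.single j 1) i = (if j < i then -1 else 1) * sgn x i := by
  by_cases h : j < i
  · simp only [h, if_true]
    rw [sgn, sgn]
    have hj : j ∈ Finset.univ.filter (fun k => k < i) := by simp [h]
    rw [← Finset.mul_prod_erase _ _ hj, ← Finset.mul_prod_erase _ _ hj]
    have h1 : (x + Pi.single j 1 : Fin n → ZMod 2) j = x j + 1 := by simp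
    rw [h1, pow_val_add_one]
    have h2 : ∀ k ∈ (Finset.univ.filter (fun k => k < i)).erase j,
        (-1:ℂ) ^ (((x + Pi.single j 1 : Fin n → ZMod 2) k).val) = (-1:ℂ) ^ ((x k).val) := by
      intro k hk
      have hkj : k ≠ j := (Finset.mem_erase.mp hk).1
      simp [Pi.single_eq_of_ne hkj]
    rw [Finset.prod_congr rfl h2]
    ring
  · simp only [h, if_false, one_mul]
    apply Finset.prod_congr rfl
    intro k hk
    have hk' : k < i := (Finset.mem_filter.mp hk).2
    have hkj : k ≠ j := by rintro rfl; exact h hk'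
    simp [Pi.single_eq_of_ne hkj]

lemma single_add_self (i : Fin n) :
    (Pi.single i 1 + Pi.single i 1 : Fin n → ZMod 2) = 0 := by
  funext k
  by_cases hk : k = i
  · subst hk; simp [show ((1:ZMod 2)+1) = 0 from rfl]
  · simp [Pi.single_eq_of_ne hk]

lemma add_single_cancel (x : Fin n → ZMod 2) (i : Fin n) :
    (x + Pi.single i 1 + Pi.single i 1 : Fin n → ZMod 2) = x := by
  rw [add_assoc, single_add_self, add_zero]

lemma single_eq_single_iff (i j : Fin n) :
    (Pi.single i 1 : Fin n → ZMod 2) = Pi.single j 1 ↔ i = j := by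
  constructor
  · intro h
    by_contra hij
    have := congrFun h i
    rw [Pi.single_eq_same,  Pi.single_eq_of_ne hij] at this
    exact one_ne_zero this
  · rintro rfl; rfl


/-- Signed adjacency matrix of the `n`-cube (sum of gamma matrices). -/
noncomputable def Wm (n : ℕ) : Matrix (Fin n → ZMod 2) (Fin n → ZMod 2) ℂ :=
  fun x y => ∑ i, if y = x + Pi.single i 1 then sgn x i else 0

lemma Wm_eq_of (x y : Fin n → ZMod 2) (i : Fin n) (h : y = x + Pi.single i 1) :
    Wm n x y = sgn x i := by
  rw [Wm]
  rw [Finset.sum_eq_single i]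
  · simp [h]
  · intro j _ hj
    rw [if_neg]
    intro h'
    apply hj
    have hx : x + Pi.single i 1 = x + Pi.single j 1 := h.symm.trans h'
    exact ((single_eq_single_iff i j).mp (add_left_cancel hx)).symm
  · intro h'
    simp at h'

lemma Wm_eq_zero (x y : Fin n → ZMod 2) (h : ∀ i, y ≠ x + Pi.single i 1) :
    Wm n x y = 0 := by
  rw [Wm]
  apply Finset.sum_eq_zero
  intro i _
  rw [if_neg (h i)]

lemma hamming_eq_one_iff (x y : Fin n → ZMod 2) :
    hammingDist x y = 1 ↔ ∃ i, y = x + Pi.single i 1 := by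
  constructor
  · intro h
    rw [hammingDist, Finset.card_eq_one] at h
    obtain ⟨i, hi⟩ := h
    refine ⟨i, ?_⟩
    funext k
    by_cases hk : k = i
    · subst hk
      have hk2 : k ∈ ({i | x i ≠ y i} : Finset (Fin n)) := by rw [hi]; exact Finset.mem_singleton_self _
      simp only [Finset.mem_filter, Finset.mem_univ, true_and] at hk2
      have h3 : y k = x k + 1 := by
        revert hk2
        generalize x k = a; generalize y k = b
        revert b; revert a; decide
      simp [h3]
    · have hk2 : k ∉ ({i | x i ≠ y i} : Finset (Fin n)) := by rw [hi]; simp [hk]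
      simp only [Finset.mem_filter, Finset.mem_univ, true_and, not_not] at hk2
      simp [Pi.single_eq_of_ne hk, hk2]
  · rintro ⟨i, rfl⟩
    rw [hammingDist]
    have : ({k | x k ≠ (x + Pi.single i 1 : Fin n → ZMod 2) k} : Finset (Fin n)) = {i} := by
      ext k
      by_cases hk : k = i
      · subst hk; simp [show ∀ a : ZMod 2, a ≠ a + 1 by decide]
      · simp [hk, Pi.single_eq_of_ne hk]
    rw [this, Finset.card_singleton]


lemma Wm_ne_zero_iff (x y : Fin n → ZMod 2) : Wm n x y ≠ 0 ↔ hammingDist x y = 1 := by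
  rw [hamming_eq_one_iff]
  constructor
  · intro h
    by_contra h'
    push_neg at h'
    exact h (Wm_eq_zero x y h')
  · rintro ⟨i, hi⟩
    rw [Wm_eq_of x y i hi]
    exact sgn_ne_zero x i

lemma Wm_symm (x y : Fin n → ZMod 2) : Wm n x y = Wm n y x := by
  rw [Wm, Wm]
  apply Finset.sum_congr rfl
  intro i _
  by_cases h : y = x + Pi.single i 1
  · have h' : x = y + Pi.single i 1 := by rw [h, add_single_cancel]
    rw [if_pos h, if_pos h', h, sgn_add_single]
    simp
  · have h' : x ≠ y + Pi.single i 1 := by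
      intro h''; apply h; rw [h'', add_single_cancel]
    rw [if_neg h, if_neg h']

lemma conj_Wm (x y : Fin n → ZMod 2) : (starRingEnd ℂ) (Wm n x y) = Wm n x y := by
  rw [Wm, map_sum]
  apply Finset.sum_congr rfl
  intro i _
  rw [apply_ite (starRingEnd ℂ), conj_sgn, map_zero]

lemma star_Wm : star (Wm n) = Wm n := by
  ext x y
  rw [Matrix.star_apply, Complex.star_def, conj_Wm, Wm_symm]

lemma cond_diag (x : Fin n → ZMod 2) (i j : Fin n) :
    x = x + Pi.single i 1 + Pi.single j 1 ↔ i = j := by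
  constructor
  · intro h
    have h2 : x + Pi.single j 1 = x + Pi.single i 1 := by
      conv_lhs => rw [h]
      rw [add_single_cancel]
    exact ((single_eq_single_iff j i).mp (add_left_cancel h2)).symm
  · rintro rfl
    rw [add_single_cancel]

lemma Wm_mul_Wm (x y : Fin n → ZMod 2) :
    (Wm n * Wm n) x y = if x = y then (n : ℂ) else 0 := by
  rw [Matrix.mul_apply]
  have step : ∀ z, Wm n x z * Wm n z y
      = ∑ i, if z = x + Pi.single i 1 then sgn x i * Wm n z y else 0 := by
    intro z
    conv_lhs => rw [Wm]
    rw [Finset.sum_mul]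
    apply Finset.sum_congr rfl
    intro i _
    rw [ite_mul, zero_mul]
  rw [Finset.sum_congr rfl (fun z _ => step z), Finset.sum_comm]
  have step2 : ∀ i : Fin n, (∑ z, if z = x + Pi.single i 1 then sgn x i * Wm n z y else 0)
      = sgn x i * Wm n (x + Pi.single i 1) y := by
    intro i
    rw [Finset.sum_ite_eq' Finset.univ (x + Pi.single i 1) (fun z => sgn x i * Wm n z y)]
    simp
  rw [Finset.sum_congr rfl (fun i _ => step2 i)]
  have step3 : ∀ i : Fin n, sgn x i * Wm n (x + Pi.single i 1) y
      = ∑ j, if y = x + Pi.single i 1 + Pi.single j 1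
          then sgn x i * sgn (x + Pi.single i 1) j else 0 := by
    intro i
    rw [Wm, Finset.mul_sum]
    apply Finset.sum_congr rfl
    intro j _
    rw [mul_ite, mul_zero]
  rw [Finset.sum_congr rfl (fun i _ => step3 i)]
  set f : Fin n → Fin n → ℂ := fun i j =>
    if y = x + Pi.single i 1 + Pi.single j 1 then sgn x i * sgn (x + Pi.single i 1) j else 0
    with hf
  by_cases hxy : x = y
  · subst hxy
    rw [if_pos rfl]
    have hrow : ∀ i : Fin n, (∑ j, f i j) = 1 := by
      intro i
      rw [Finset.sum_eq_single i]
      · rw [hf]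
        simp only
        rw [if_pos ((cond_diag x i i).mpr rfl), sgn_add_single]
        simp only [lt_self_iff_false, if_false, one_mul]
        exact sgn_mul_self x i
      · intro j _ hj
        rw [hf]
        simp only
        rw [if_neg]
        intro h
        exact hj ((cond_diag x i j).mp h).symm
      · intro h; simp at h
    rw [Finset.sum_congr rfl (fun i _ => hrow i)]
    simp
  · rw [if_neg hxy]
    have hanti : ∀ i j : Fin n, f i j = - f j i := by
      intro i j
      by_cases hij : i = j
      · subst hij
        rw [hf]
        simp only
        rw [if_neg, neg_zero]
        intro h
        rw [add_single_cancel] at h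
        exact hxy h.symm
      · have hcond : (y = x + Pi.single i 1 + Pi.single j 1)
            ↔ (y = x + Pi.single j 1 + Pi.single i 1) := by
          rw [add_assoc, add_assoc, add_comm (Pi.single i 1)]
        rw [hf]
        simp only
        by_cases hc : y = x + Pi.single i 1 + Pi.single j 1
        · rw [if_pos hc, if_pos (hcond.mp hc), sgn_add_single, sgn_add_single]
          rcases lt_or_gt_of_ne hij with h | h
          · rw [if_pos h, if_neg (asymm h)]; ring
          · rw [if_neg (asymm h), if_pos h]; ring
        · rw [if_neg hc, if_neg (fun h => hc (hcond.mpr h)), neg_zero]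
    have hS : (∑ i, ∑ j, f i j) = - ∑ i, ∑ j, f i j := by
      conv_lhs => rw [Finset.sum_comm]
      rw [← Finset.sum_neg_distrib]
      apply Finset.sum_congr rfl
      intro i _
      rw [← Finset.sum_neg_distrib]
      apply Finset.sum_congr rfl
      intro j _
      exact hanti j i
    exact add_self_eq_zero.mp (eq_neg_iff_add_eq_zero.mp hS)


lemma Wm_mul_Wm' : Wm n * Wm n = (n:ℂ) • (1 : Matrix (Fin n → ZMod 2) (Fin n → ZMod 2) ℂ) := by
  ext x y
  rw [Wm_mul_Wm, Matrix.smul_apply, Matrix.one_apply]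
  by_cases h : x = y <;> simp [h]

end Stmt15

/-- The `n`-cube `Q_n` is the digraph of a unitary matrix: there is a unitary matrix
indexed by the vectors of `(ZMod 2)^n` whose `(x,y)` entry is non-zero exactly when the
Hamming distance between `x` and `y` is `1`. -/
theorem stmt_15 (n : ℕ) (hn : 1 ≤ n) :
    ∃ U : Matrix (Fin n → ZMod 2) (Fin n → ZMod 2) ℂ,
      U ∈ Matrix.unitaryGroup (Fin n → ZMod 2) ℂ ∧
      ∀ x y : Fin n → ZMod 2, U x y ≠ 0 ↔ hammingDist x y = 1 := by
  have hn0 : (n:ℝ) ≠ 0 := Nat.cast_ne_zero.mpr (Nat.one_le_iff_ne_zero.mp hn)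
  have hs : Real.sqrt n ≠ 0 := by
    refine ne_of_gt (Real.sqrt_pos.mpr ?_)
    exact lt_of_le_of_ne (Nat.cast_nonneg n) (Ne.symm hn0)
  set c : ℂ := ((Real.sqrt n : ℝ) : ℂ)⁻¹ with hc
  have hcne : c ≠ 0 := by
    rw [hc]
    exact inv_ne_zero (by exact_mod_cast hs)
  have hcc : c * c * (n:ℂ) = 1 := by
    rw [hc, ← mul_inv, ← Complex.ofReal_mul, Real.mul_self_sqrt (Nat.cast_nonneg n)]
    rw [Complex.ofReal_natCast, inv_mul_cancel₀ (by exact_mod_cast hn0)]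
  refine ⟨c • Wm n, ?_, ?_⟩
  · rw [Matrix.mem_unitaryGroup_iff]
    rw [star_smul, star_Wm, Matrix.smul_mul, Matrix.mul_smul, Wm_mul_Wm', smul_smul, smul_smul]
    have : star c = c := by
      rw [hc, star_inv₀, Complex.star_def, Complex.conj_ofReal]
    rw [this, hcc, one_smul]
  · intro x y
    rw [Matrix.smul_apply, smul_eq_mul, mul_ne_zero_iff]
    constructor
    · intro h
      exact (Wm_ne_zero_iff x y).mp h.2
    · intro h
      exact ⟨hcne, (Wm_ne_zero_iff x y).mpr h⟩
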